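/- The polyomino P_W does not fold onto the surface C of the unit cube. -/

import Mathlib

/-!
Common formal framework: polyominoes (as square complexes with possible slits),
their topological realisations, folded states, ambient isotopy, foldings onto the
surface of the unit cube, unlinks, and consistent mappings.
-/

open Classical
noncomputable section

namespace CubeFold

/-- Euclidean plane. -/
abbrev R2 := EuclideanSpace ℝ (Fin 2)
/-- Euclidean 3-space. -/
abbrev R3 := EuclideanSpace ℝ (Fin 3)

/-- A cell (unit square) of the integer lattice, indexed by its lower-left corner. -/
abbrev Cell := ℤ × ℤ

/-- Two cells are adjacent if they share an edge of the lattice. -/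
def cellAdj (c d : Cell) : Prop := (c.1 - d.1).natAbs + (c.2 - d.2).natAbs = 1

instance (c d : Cell) : Decidable (cellAdj c d) :=
  inferInstanceAs (Decidable ((c.1 - d.1).natAbs + (c.2 - d.2).natAbs = 1))

/-- A polyomino: a finite nonempty set of lattice cells, together with a symmetric set of
`joins` (pairs of adjacent cells glued along their common edge; adjacent cells that are not
joined are separated by a slit), such that the whole figure is edge-connected.
Since the cells sit at given positions of the plane, such a polyomino automatically admits a
flat placement in which distinct faces overlap only in edges. -/
structure Polyomino where
  cells : Finset Cell
  nonempty : cells.Nonempty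
  joins : Finset (Cell × Cell)
  joins_symm : ∀ e ∈ joins, (e.2, e.1) ∈ joins
  joins_mem : ∀ e ∈ joins, e.1 ∈ cells ∧ e.2 ∈ cells
  joins_adj : ∀ e ∈ joins, cellAdj e.1 e.2
  connected : ∀ c ∈ cells, ∀ d ∈ cells,
    Relation.ReflTransGen (fun a b => (a, b) ∈ joins) c d

/-- The closed unit square in the plane. -/
def unitSq : Set R2 := {x | 0 ≤ x 0 ∧ x 0 ≤ 1 ∧ 0 ≤ x 1 ∧ x 1 ≤ 1}

def mk2 (a b : ℝ) : R2 := WithLp.toLp 2 ![a, b]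

/-- The point of the plane corresponding to local coordinates `x` inside cell `c`. -/
def cellPt (c : Cell) (x : R2) : R2 := mk2 ((c.1 : ℝ) + x 0) ((c.2 : ℝ) + x 1)

/-- Index space: disjoint union of the (closed) unit squares of the cells of `P`. -/
def PolyIdx (P : Polyomino) : Type := {c : Cell // c ∈ P.cells} × {x : R2 // x ∈ unitSq}

instance (P : Polyomino) : TopologicalSpace (PolyIdx P) := by
  unfold PolyIdx; infer_instance

/-- Gluing relation: two points of (possibly different) cells are identified when they occupy
the same point of the plane and their cells are equal or joined. -/
def glueRel (P : Polyomino) : PolyIdx P → PolyIdx P → Prop := fun a b =>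
  cellPt a.1.1 a.2.1 = cellPt b.1.1 b.2.1 ∧ (a.1.1 = b.1.1 ∨ (a.1.1, b.1.1) ∈ P.joins)

/-- The underlying topological space of the polyomino `P` (a square complex). -/
def PolySpace (P : Polyomino) : Type := Quot (glueRel P)

instance (P : Polyomino) : TopologicalSpace (PolySpace P) := by
  unfold PolySpace; infer_instance

/-- The point of `PolySpace P` lying in cell `c` with local coordinates `x`. -/
def pt (P : Polyomino) (c : Cell) (hc : c ∈ P.cells) (x : R2) (hx : x ∈ unitSq) :
    PolySpace P :=
  Quot.mk (glueRel P) (⟨c, hc⟩, ⟨x, hx⟩)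

/-- The canonical flat placement of `P` in the plane. -/
def flatMap (P : Polyomino) : PolySpace P → R2 :=
  Quot.lift (fun a => cellPt a.1.1 a.2.1) (fun _ _ h => h.1)

/-- A map `PolySpace P → R3` is piecewise linear if each cell can be covered by finitely
many convex pieces on each of which the map is affine. -/
def IsPLMap (P : Polyomino) (F : PolySpace P → R3) : Prop :=
  ∀ (c : Cell) (hc : c ∈ P.cells), ∃ S : Finset (Finset R2),
    (∀ x ∈ unitSq, ∃ T ∈ S, x ∈ convexHull ℝ (T : Set R2)) ∧
    ∀ T ∈ S, ∃ g : R2 →ᵃ[ℝ] R3, ∀ x, ∀ hx : x ∈ unitSq,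
      x ∈ convexHull ℝ (T : Set R2) → F (pt P c hc x hx) = g x

/-- A folded state of `P`: a piecewise linear topological embedding of `P` into `R3`. -/
structure FoldedState (P : Polyomino) where
  toFun : PolySpace P → R3
  embedding : Topology.IsEmbedding toFun
  pl : IsPLMap P toFun

/-- A folding blueprint: a map whose restriction to each face of `P` is an isometry. -/
def IsBlueprint (P : Polyomino) (β : PolySpace P → R3) : Prop :=
  ∀ (c : Cell) (hc : c ∈ P.cells), ∀ (x y : R2) (hx : x ∈ unitSq) (hy : y ∈ unitSq),
    dist (β (pt P c hc x hx)) (β (pt P c hc y hy)) = dist x y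

/-- A folded state `F` (ε-)corresponds to a blueprint `β` (with the fixed ε = 1/2). -/
def Corresponds (P : Polyomino) (F : FoldedState P) (β : PolySpace P → R3) : Prop :=
  ∀ p : PolySpace P, dist (F.toFun p) (β p) < 1 / 2

/-- A flat folding blueprint: an isometric placement of the flat polyomino inside a plane
of `R3`. -/
def IsFlatBlueprint (P : Polyomino) (β : PolySpace P → R3) : Prop :=
  ∃ j : R2 → R3, Isometry j ∧ β = j ∘ flatMap P

/-- A trivial folding: a realisation of a flat folding blueprint. -/
def IsTrivialFolding (P : Polyomino) (F : FoldedState P) : Prop :=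
  ∃ β : PolySpace P → R3, IsFlatBlueprint P β ∧ Corresponds P F β

/-- An ambient isotopy of `R3`: a continuous family of self-homeomorphisms starting at the
identity. -/
def IsAmbientIsotopy (H : ℝ → R3 → R3) : Prop :=
  Continuous (fun q : ℝ × R3 => H q.1 q.2) ∧
  (∀ t : ℝ, ∃ h : R3 ≃ₜ R3, ∀ x, H t x = h x) ∧
  (∀ x, H 0 x = x)

/-- A folded state is valid (is a folding) if it is ambient isotopic to a trivial folding. -/
def ValidFolding (P : Polyomino) (F : FoldedState P) : Prop :=
  ∃ H : ℝ → R3 → R3, IsAmbientIsotopy H ∧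
    ∃ G : FoldedState P, IsTrivialFolding P G ∧ ∀ p, H 1 (F.toFun p) = G.toFun p

/-- The surface of the unit cube in `R3`. -/
def cubeSurface : Set R3 :=
  {p | (∀ i, 0 ≤ p i ∧ p i ≤ 1) ∧ ∃ i, p i = 0 ∨ p i = 1}

/-- The face of the unit cube with normal direction `i` at height `0` or `1`. -/
def cubeFace (i : Fin 3) (b : Bool) : Set R3 :=
  {p | (∀ j, 0 ≤ p j ∧ p j ≤ 1) ∧ p i = if b then 1 else 0}

/-- `P` folds onto the surface of the unit cube: some valid folding of `P` corresponds to a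
surjective folding blueprint `β : P → C`. -/
def FoldsOntoCube (P : Polyomino) : Prop :=
  ∃ F : FoldedState P, ValidFolding P F ∧
    ∃ β : PolySpace P → R3, IsBlueprint P β ∧ Set.range β = cubeSurface ∧
      Corresponds P F β

/-- `n` disjoint round circles, side by side in a plane. -/
def stdCircles (n : ℕ) : Set R3 :=
  {p | ∃ k : ℕ, k < n ∧ (p 0 - 3 * (k : ℝ)) ^ 2 + (p 1) ^ 2 = 1 ∧ p 2 = 0}

/-- A subset of `R3` is an unlink if some ambient isotopy carries it to a finite collection
of circles embedded side by side in a plane. -/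
def IsUnlink (L : Set R3) : Prop :=
  ∃ (n : ℕ) (H : ℝ → R3 → R3), IsAmbientIsotopy H ∧ (fun x => H 1 x) '' L = stdCircles n

/-- The (topological) boundary of the polyomino surface: the set of points having no open
neighbourhood homeomorphic to the plane. -/
def polyBoundary (P : Polyomino) : Set (PolySpace P) :=
  {p | ¬ ∃ U : Set (PolySpace P), IsOpen U ∧ p ∈ U ∧ Nonempty (U ≃ₜ R2)}

/-- A polyhedron in `R3`: a finite union of convex polytopes. -/
def IsPolyhedron (Q : Set R3) : Prop :=
  ∃ S : Finset (Finset R3), Q = ⋃ T ∈ S, convexHull ℝ (T : Set R3)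

/-- A polyhedral sphere: a polyhedron homeomorphic to the 2-sphere. -/
def IsPolyhedralSphere (Q : Set R3) : Prop :=
  IsPolyhedron Q ∧ Nonempty (Q ≃ₜ Metric.sphere (0 : R3) 1)

/-! ### Consistent mappings to the combinatorial cube -/

/-- The corner of cell `c` with local coordinates `k`. -/
def cornerPt (c : Cell) (k : Fin 2 × Fin 2) : ℤ × ℤ :=
  (c.1 + ((k.1 : ℕ) : ℤ), c.2 + ((k.2 : ℕ) : ℤ))

/-- Number of coordinates in which two vertices of the cube differ. -/
def vdiff (u v : Fin 3 → Bool) : ℕ := (Finset.univ.filter fun i => u i ≠ v i).card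

/-- Number of coordinates in which two corners of a square differ. -/
def kdiff (k k' : Fin 2 × Fin 2) : ℕ :=
  (if k.1 = k'.1 then 0 else 1) + (if k.2 = k'.2 then 0 else 1)

/-- A consistent mapping from the polyomino `P` to the unit cube, viewed as a homomorphism of
square complexes: cells are mapped to faces (`Fin 3 × Bool`: a normal direction together with a
side) and corners of cells to vertices of the cube (`Fin 3 → Bool`), so that each cell is mapped
isomorphically onto a face and identified corners of joined cells have equal images (hence edges
are mapped to edges and all incidences are preserved). -/
structure ConsMap (P : Polyomino) where
  cellMap : Cell → Fin 3 × Bool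
  vertMap : Cell → Fin 2 × Fin 2 → (Fin 3 → Bool)
  vert_on_face : ∀ c ∈ P.cells, ∀ k, vertMap c k (cellMap c).1 = (cellMap c).2
  face_iso : ∀ c ∈ P.cells, ∀ k k', vdiff (vertMap c k) (vertMap c k') = kdiff k k'
  join_compat : ∀ e ∈ P.joins, ∀ k k', cornerPt e.1 k = cornerPt e.2 k' →
    vertMap e.1 k = vertMap e.2 k'

/-- A consistent mapping is surjective if every face of the cube is the image of a cell. -/
def ConsMap.Surjective {P : Polyomino} (φ : ConsMap P) : Prop :=
  ∀ f : Fin 3 × Bool, ∃ c ∈ P.cells, φ.cellMap c = f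

/-! ### Rectangular polyominoes, holes and slits -/

/-- The cells of the full `m × n` rectangle (`m` columns, `n` rows). -/
def rectCells (m n : ℕ) : Finset Cell := Finset.Icc (0, 0) ((m : ℤ) - 1, (n : ℤ) - 1)

/-- All joins between adjacent cells of `S`. -/
def fullJoins (S : Finset Cell) : Finset (Cell × Cell) :=
  (S ×ˢ S).filter fun e => cellAdj e.1 e.2

/-- The two cells separated by the vertical lattice edge from `(p,q)` to `(p,q+1)`. -/
def vE (p q : ℤ) : Cell × Cell := ((p - 1, q), (p, q))

/-- The two cells separated by the horizontal lattice edge from `(p,q)` to `(p+1,q)`. -/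
def hE (p q : ℤ) : Cell × Cell := ((p, q - 1), (p, q))

/-- Both orientations of a join. -/
def remPair (e : Cell × Cell) : Finset (Cell × Cell) := {e, (e.2, e.1)}

/-- A lattice vertex interior to the `m × n` rectangle. -/
def intVert (m n : ℕ) (v : ℤ × ℤ) : Prop :=
  1 ≤ v.1 ∧ v.1 ≤ (m : ℤ) - 1 ∧ 1 ≤ v.2 ∧ v.2 ≤ (n : ℤ) - 1

/-- The four sides of the cell `c`, as pairs of separated cells:
left, right, bottom, top. -/
def cellSide (c : Cell) : Fin 4 → Cell × Cell :=
  ![vE c.1 c.2, vE (c.1 + 1) c.2, hE c.1 c.2, hE c.1 (c.2 + 1)]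

/-- `P` is the full `m × n` rectangle with exactly the joins of `R` slit open. -/
def RectWithSlits (P : Polyomino) (m n : ℕ) (R : Finset (Cell × Cell)) : Prop :=
  P.cells = rectCells m n ∧ P.joins = fullJoins (rectCells m n) \ R

/-- `P` is an `m × n` rectangle with a single unit square hole `h` (and no other holes). -/
def RectWithUnitHole (P : Polyomino) (m n : ℕ) (h : Cell) : Prop :=
  1 ≤ h.1 ∧ h.1 ≤ (m : ℤ) - 2 ∧ 1 ≤ h.2 ∧ h.2 ≤ (n : ℤ) - 2 ∧
  P.cells = (rectCells m n).erase h ∧ P.joins = fullJoins P.cells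

/-- `P` is an `m × n` rectangle with a single slit of size 1 (and no other holes). -/
def RectWithSlit1 (P : Polyomino) (m n : ℕ) : Prop :=
  ∃ p q : ℤ,
    (intVert m n (p, q) ∧ intVert m n (p, q + 1) ∧ RectWithSlits P m n (remPair (vE p q))) ∨
    (intVert m n (p, q) ∧ intVert m n (p + 1, q) ∧ RectWithSlits P m n (remPair (hE p q)))

/-- `P` is an `m × n` rectangle with a single I-slit of size 2 (and no other holes). -/
def RectWithISlit2 (P : Polyomino) (m n : ℕ) : Prop :=
  ∃ p q : ℤ,
    (intVert m n (p, q) ∧ intVert m n (p, q + 1) ∧ intVert m n (p, q + 2) ∧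
      RectWithSlits P m n (remPair (vE p q) ∪ remPair (vE p (q + 1)))) ∨
    (intVert m n (p, q) ∧ intVert m n (p + 1, q) ∧ intVert m n (p + 2, q) ∧
      RectWithSlits P m n (remPair (hE p q) ∪ remPair (hE (p + 1) q)))

/-- `P` is an `m × n` rectangle with a single L-slit of size 2 (and no other holes):
two perpendicular slit edges meeting at the interior vertex `(p,q)`. -/
def RectWithLSlit2 (P : Polyomino) (m n : ℕ) : Prop :=
  ∃ p q : ℤ, ∃ s t : Bool,
    intVert m n (p, q) ∧
    intVert m n (p, q + (if s then 1 else -1)) ∧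
    intVert m n (p + (if t then 1 else -1), q) ∧
    RectWithSlits P m n
      (remPair (vE p (if s then q else q - 1)) ∪ remPair (hE (if t then p else p - 1) q))

/-- `P` is an `m × n` rectangle with a single U-slit of size 3 (and no other holes):
three of the four sides of the cell `c` are slit open. -/
def RectWithUSlit3 (P : Polyomino) (m n : ℕ) : Prop :=
  ∃ c : Cell, ∃ k : Fin 4,
    intVert m n (c.1, c.2) ∧ intVert m n (c.1 + 1, c.2) ∧
    intVert m n (c.1, c.2 + 1) ∧ intVert m n (c.1 + 1, c.2 + 1) ∧
    RectWithSlits P m n ((Finset.univ.erase k).biUnion fun k' => remPair (cellSide c k'))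

/-- `P` is an `m × n` rectangle whose holes are exactly the unit square holes `H`
(all interior, pairwise non-touching) and no other holes. -/
def RectWithUnitHoles (P : Polyomino) (m n : ℕ) (H : Finset Cell) : Prop :=
  (∀ h ∈ H, 1 ≤ h.1 ∧ h.1 ≤ (m : ℤ) - 2 ∧ 1 ≤ h.2 ∧ h.2 ≤ (n : ℤ) - 2) ∧
  (∀ h ∈ H, ∀ h' ∈ H, h ≠ h' → 2 ≤ max (h.1 - h'.1).natAbs (h.2 - h'.2).natAbs) ∧
  P.cells = rectCells m n \ H ∧ P.joins = fullJoins P.cells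

/-- Two unit square holes cooperate: they lie in the same or adjacent rows (resp. columns) and
the number of columns (resp. rows) strictly between them is odd. -/
def Cooperate (h₁ h₂ : Cell) : Prop :=
  ((h₁.2 - h₂.2).natAbs ≤ 1 ∧ Odd ((h₁.1 - h₂.1).natAbs - 1)) ∨
  ((h₁.1 - h₂.1).natAbs ≤ 1 ∧ Odd ((h₁.2 - h₂.2).natAbs - 1))

/-- The images under a consistent mapping of the four boundary edges of a unit square hole `h`
(each edge given as the unordered pair of the images of its two endpoints):
the facing sides of the right, left, top and bottom neighbouring cell of `h`. -/
def holeSideEdge {P : Polyomino} (φ : ConsMap P) (h : Cell) : Fin 4 → Set (Fin 3 → Bool) :=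
  ![{φ.vertMap (h.1 + 1, h.2) (0, 0), φ.vertMap (h.1 + 1, h.2) (0, 1)},
    {φ.vertMap (h.1 - 1, h.2) (1, 0), φ.vertMap (h.1 - 1, h.2) (1, 1)},
    {φ.vertMap (h.1, h.2 + 1) (0, 0), φ.vertMap (h.1, h.2 + 1) (1, 0)},
    {φ.vertMap (h.1, h.2 - 1) (0, 1), φ.vertMap (h.1, h.2 - 1) (1, 1)}]

/-- A consistent mapping is good if for no unit square hole of `H` all four boundary edges of
the hole are mapped to a single edge of the cube. -/
def ConsMap.IsGood {P : Polyomino} (φ : ConsMap P) (H : Finset Cell) : Prop :=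
  ∀ h ∈ H, ¬ ∀ k k' : Fin 4, holeSideEdge φ h k = holeSideEdge φ h k'

/-! ### Tree-shaped polyominoes and bounding boxes -/

/-- A polyomino is tree-shaped if its dual graph is a tree; since it is connected by
definition, this amounts to having exactly `#cells - 1` (unordered) joins. -/
def TreeShaped (P : Polyomino) : Prop := P.joins.card = 2 * (P.cells.card - 1)

/-- `P` has bounding box with lower-left cell `(x0, y0)`, `w` columns and `h` rows. -/
def HasBoundingBox (P : Polyomino) (x0 y0 : ℤ) (w h : ℕ) : Prop :=
  (∀ c ∈ P.cells, x0 ≤ c.1 ∧ c.1 < x0 + w ∧ y0 ≤ c.2 ∧ c.2 < y0 + h) ∧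
  (∃ c ∈ P.cells, c.1 = x0) ∧ (∃ c ∈ P.cells, c.1 = x0 + w - 1) ∧
  (∃ c ∈ P.cells, c.2 = y0) ∧ (∃ c ∈ P.cells, c.2 = y0 + h - 1)

/-- Reachability in the dual graph of `P` avoiding the set `S` of cells. -/
def ReachAvoid (P : Polyomino) (S : Cell → Prop) : Cell → Cell → Prop :=
  Relation.ReflTransGen fun u v => (u, v) ∈ P.joins ∧ ¬ S u ∧ ¬ S v

/-- The cells of the polyomino `P_W`. -/
def pwCells : Finset Cell := {(1, 1), (2, 1), (3, 1), (3, 2), (4, 2), (4, 3), (4, 4)}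

/-- The eight signed-permutation symmetries of the lattice, composed with a translation. -/
def sym8 (s₁ s₂ sw : Bool) (t : Cell) (p : Cell) : Cell :=
  let q : Cell := if sw then (p.2, p.1) else p
  (t.1 + (if s₁ then -q.1 else q.1), t.2 + (if s₂ then -q.2 else q.2))

/-- `P` is congruent (up to rotation, reflection and translation) to the polyomino `P_W`. -/
def CongruentToPW (P : Polyomino) : Prop :=
  ∃ s₁ s₂ sw : Bool, ∃ t : Cell,
    P.cells.image (sym8 s₁ s₂ sw t) = pwCells ∧
    P.joins.image (fun e => (sym8 s₁ s₂ sw t e.1, sym8 s₁ s₂ sw t e.2)) = fullJoins pwCells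



/-! ### Auxiliary development for Statement 12 -/

set_option maxRecDepth 100000
set_option synthInstance.maxSize 2000

open RealInnerProductSpace

lemma mk2_e0 (a b : ℝ) : mk2 a b 0 = a := rfl
lemma mk2_e1 (a b : ℝ) : mk2 a b 1 = b := rfl
lemma mem_unitSq {a b : ℝ} (h1 : 0 ≤ a) (h2 : a ≤ 1) (h3 : 0 ≤ b) (h4 : b ≤ 1) :
    mk2 a b ∈ unitSq := ⟨h1, h2, h3, h4⟩

lemma dist_sq_R2 (x y : R2) : dist x y ^ 2 = (x 0 - y 0)^2 + (x 1 - y 1)^2 := by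
  rw [EuclideanSpace.dist_eq, Real.sq_sqrt (by positivity), Fin.sum_univ_two]
  simp [Real.dist_eq, sq_abs]

lemma norm_sq_R3 (x : R3) : ‖x‖ ^ 2 = ∑ i, x i ^ 2 := by
  rw [EuclideanSpace.norm_eq, Real.sq_sqrt (by positivity)]
  simp [Real.norm_eq_abs, sq_abs]

lemma inner_R3 (x y : R3) : ⟪x, y⟫ = ∑ i, x i * y i := by
  rw [PiLp.inner_apply]; simp [RCLike.inner_apply]
  exact Finset.sum_congr rfl fun i _ => mul_comm _ _

lemma square_isom_affine (f : R2 → R3)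
    (hf : ∀ x, x ∈ unitSq → ∀ y, y ∈ unitSq → dist (f x) (f y) = dist x y) :
    ∀ x, x ∈ unitSq →
      f x = f (mk2 0 0) + x 0 • (f (mk2 1 0) - f (mk2 0 0)) + x 1 • (f (mk2 0 1) - f (mk2 0 0)) := by
  have h00 : (mk2 0 0 : R2) ∈ unitSq := mem_unitSq le_rfl zero_le_one le_rfl zero_le_one
  have h10 : (mk2 1 0 : R2) ∈ unitSq := mem_unitSq zero_le_one le_rfl le_rfl zero_le_one
  have h01 : (mk2 0 1 : R2) ∈ unitSq := mem_unitSq le_rfl zero_le_one zero_le_one le_rfl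
  have key : ∀ x, x ∈ unitSq → ∀ y, y ∈ unitSq →
      ⟪f x - f (mk2 0 0), f y - f (mk2 0 0)⟫ = x 0 * y 0 + x 1 * y 1 := by
    intro x hx y hy
    have hA : ‖f x - f (mk2 0 0)‖ ^ 2 = x 0 ^ 2 + x 1 ^ 2 := by
      rw [← dist_eq_norm, hf x hx _ h00, dist_sq_R2]
      simp [mk2_e0, mk2_e1]
    have hB : ‖f y - f (mk2 0 0)‖ ^ 2 = y 0 ^ 2 + y 1 ^ 2 := by
      rw [← dist_eq_norm, hf y hy _ h00, dist_sq_R2]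
      simp [mk2_e0, mk2_e1]
    have hAB : ‖f x - f (mk2 0 0) - (f y - f (mk2 0 0))‖ ^ 2 = (x 0 - y 0)^2 + (x 1 - y 1)^2 := by
      have e : f x - f (mk2 0 0) - (f y - f (mk2 0 0)) = f x - f y := by abel
      rw [e, ← dist_eq_norm, hf x hx y hy, dist_sq_R2]
    have hpol := norm_sub_sq_real (f x - f (mk2 0 0)) (f y - f (mk2 0 0))
    rw [hA, hB, hAB] at hpol
    nlinarith [hpol]
  intro x hx
  set u := f (mk2 1 0) - f (mk2 0 0) with hu
  set v := f (mk2 0 1) - f (mk2 0 0) with hv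
  set A := f x - f (mk2 0 0) with hA
  have hAA : ⟪A, A⟫ = x 0 * x 0 + x 1 * x 1 := key x hx x hx
  have hAu : ⟪A, u⟫ = x 0 := by simpa [mk2_e0, mk2_e1] using key x hx _ h10
  have hAv : ⟪A, v⟫ = x 1 := by simpa [mk2_e0, mk2_e1] using key x hx _ h01
  have huA : ⟪u, A⟫ = x 0 := by rw [real_inner_comm]; exact hAu
  have hvA : ⟪v, A⟫ = x 1 := by rw [real_inner_comm]; exact hAv
  have huu : ⟪u, u⟫ = 1 := by simpa [mk2_e0, mk2_e1] using key _ h10 _ h10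
  have hvv : ⟪v, v⟫ = 1 := by simpa [mk2_e0, mk2_e1] using key _ h01 _ h01
  have huv : ⟪u, v⟫ = 0 := by simpa [mk2_e0, mk2_e1] using key _ h10 _ h01
  have hvu : ⟪v, u⟫ = 0 := by rw [real_inner_comm]; exact huv
  have hD : ⟪A - (x 0 • u + x 1 • v), A - (x 0 • u + x 1 • v)⟫ = 0 := by
    simp only [inner_sub_left, inner_sub_right, inner_add_left, inner_add_right,
      real_inner_smul_left, real_inner_smul_right, hAA, hAu, hAv, huA, hvA, huu, hvv, huv, hvu]
    ring
  have hD0 : A - (x 0 • u + x 1 • v) = 0 := inner_self_eq_zero.mp hD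
  have : f x - (f (mk2 0 0) + x 0 • u + x 1 • v) = A - (x 0 • u + x 1 • v) := by
    rw [hA]; abel
  have h2 := this.trans hD0
  have := sub_eq_zero.mp h2
  exact this
/-- Boolean value as a real number. -/
def bval (b : Bool) : ℝ := if b then 1 else 0
def bvec (w : Fin 3 → Bool) : R3 := WithLp.toLp 2 (fun i => bval (w i))
def cptx (m : Fin 2) : ℝ := if m = 0 then 0 else 1
def cpt (k : Fin 2 × Fin 2) : R2 := mk2 (cptx k.1) (cptx k.2)

lemma cptx01 (m : Fin 2) : cptx m = 0 ∨ cptx m = 1 := by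
  unfold cptx; split; exacts [Or.inl rfl, Or.inr rfl]
lemma cpt_mem (k : Fin 2 × Fin 2) : cpt k ∈ unitSq := by
  rcases cptx01 k.1 with h1 | h1 <;> rcases cptx01 k.2 with h2 | h2 <;>
    exact mem_unitSq (by norm_num [h1]) (by norm_num [h1]) (by norm_num [h2]) (by norm_num [h2])
lemma bval_inj {x y : Bool} (h : bval x = bval y) : x = y := by
  cases x <;> cases y <;> first | rfl | (norm_num [bval] at h)
lemma bvec_inj {x y : Fin 3 → Bool} (h : bvec x = bvec y) : x = y :=
  funext fun i => bval_inj (congrArg (fun v : R3 => v i) h)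

lemma bvec_dist (x y : Fin 3 → Bool) : ‖bvec x - bvec y‖ ^ 2 = (vdiff x y : ℝ) := by
  rw [norm_sq_R3]
  have : (vdiff x y : ℝ) = ∑ i : Fin 3, (if x i ≠ y i then (1:ℝ) else 0) := by
    rw [vdiff, Finset.card_filter]; push_cast; rfl
  rw [this]
  apply Finset.sum_congr rfl
  intro i _
  have : (bvec x - bvec y) i = bval (x i) - bval (y i) := rfl
  rw [this]
  cases hx : x i <;> cases hy : y i <;> norm_num [bval]

lemma cpt_dist (k k' : Fin 2 × Fin 2) : dist (cpt k) (cpt k') ^ 2 = (kdiff k k' : ℝ) := by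
  rw [dist_sq_R2]
  obtain ⟨a, b⟩ := k; obtain ⟨c, d⟩ := k'
  fin_cases a <;> fin_cases b <;> fin_cases c <;> fin_cases d <;>
    norm_num [cpt, cptx, kdiff, mk2_e0, mk2_e1]

lemma abs_add_le (a p q : ℝ) (h1 : 0 ≤ a) (h2 : a ≤ 1) (h3 : 0 ≤ a+p) (h4 : a+p ≤ 1)
    (h5 : 0 ≤ a+q) (h6 : a+q ≤ 1) (h7 : 0 ≤ a+p+q) (h8 : a+p+q ≤ 1) : |p| + |q| ≤ 1 := by
  rcases abs_cases p with ⟨hp, _⟩ | ⟨hp, _⟩ <;> rcases abs_cases q with ⟨hq, _⟩ | ⟨hq, _⟩ <;>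
    linarith

lemma one_le_abs_add (x y : ℝ) (h : x^2 + y^2 = 1) : 1 ≤ |x| + |y| := by
  nlinarith [abs_nonneg x, abs_nonneg y, sq_abs x, sq_abs y,
    mul_nonneg (abs_nonneg x) (abs_nonneg y)]

lemma sq_one_cases {x : ℝ} (h : x ^ 2 = 1) : x = 1 ∨ x = -1 := by
  have : (x - 1) * (x + 1) = 0 := by linear_combination h
  rcases mul_eq_zero.mp this with h' | h'
  · exact Or.inl (by linarith)
  · exact Or.inr (by linarith)

lemma vertex_coord (a p k : ℝ) (hk : k = 0 ∨ k = 1) (h1 : 0 ≤ a) (h2 : a ≤ 1)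
    (h3 : 0 ≤ a + p) (h4 : a + p ≤ 1) (hp : p = 1 ∨ p = -1) :
    a + k * p = 0 ∨ a + k * p = 1 := by
  rcases hp with hp | hp <;> rcases hk with hk | hk <;> subst hp <;> subst hk <;>
    [skip; skip; skip; skip] <;>
    first
      | (left; linarith)
      | (right; linarith)

lemma fin3_compl : ∀ i0 : Fin 3, ∃ j1 j2 : Fin 3, j1 ≠ j2 ∧ j1 ≠ i0 ∧ j2 ≠ i0 ∧
    ∀ i, i = i0 ∨ i = j1 ∨ i = j2 := by decide

lemma sum3_eq (g : Fin 3 → ℝ) (i0 j1 j2 : Fin 3) (h12 : j1 ≠ j2) (h1 : j1 ≠ i0)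
    (h2 : j2 ≠ i0) (hcov : ∀ i, i = i0 ∨ i = j1 ∨ i = j2) :
    ∑ i, g i = g i0 + g j1 + g j2 := by
  have huniv : (Finset.univ : Finset (Fin 3)) = {i0, j1, j2} :=
    Finset.ext fun i => ⟨fun _ => by simpa using hcov i, fun _ => Finset.mem_univ i⟩
  rw [huniv, Finset.sum_insert (by simp [Ne.symm h1, Ne.symm h2]),
    Finset.sum_insert (by simp [h12]), Finset.sum_singleton]
  ring

set_option maxHeartbeats 1000000 in
lemma square_in_cube (f : R2 → R3)
    (hf : ∀ x, x ∈ unitSq → ∀ y, y ∈ unitSq → dist (f x) (f y) = dist x y)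
    (hmem : ∀ x, x ∈ unitSq → f x ∈ cubeSurface) :
    ∃ (i0 : Fin 3) (b0 : Bool) (w : Fin 2 × Fin 2 → Fin 3 → Bool),
      (∀ k, f (cpt k) = bvec (w k)) ∧
      (∀ k k', vdiff (w k) (w k') = kdiff k k') ∧
      (∀ k, w k i0 = b0) ∧
      (∀ x, x ∈ unitSq → f x i0 = bval b0) := by
  have h00 : (mk2 0 0 : R2) ∈ unitSq := mem_unitSq le_rfl zero_le_one le_rfl zero_le_one
  have h10 : (mk2 1 0 : R2) ∈ unitSq := mem_unitSq zero_le_one le_rfl le_rfl zero_le_one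
  have h01 : (mk2 0 1 : R2) ∈ unitSq := mem_unitSq le_rfl zero_le_one zero_le_one le_rfl
  have haff := square_isom_affine f hf
  set f0 := f (mk2 0 0) with hf0def
  set u := f (mk2 1 0) - f (mk2 0 0) with hudef
  set v := f (mk2 0 1) - f (mk2 0 0) with hvdef
  have happ : ∀ (s t : ℝ) (i : Fin 3), (f0 + s • u + t • v) i = f0 i + s * u i + t * v i :=
    fun s t i => rfl
  have haff' : ∀ (s t : ℝ), 0 ≤ s → s ≤ 1 → 0 ≤ t → t ≤ 1 →
      f (mk2 s t) = f0 + s • u + t • v := by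
    intro s t hs hs' ht ht'
    have hx : mk2 s t ∈ unitSq := mem_unitSq hs hs' ht ht'
    rw [haff _ hx, mk2_e0, mk2_e1]
  have hFmem : ∀ (s t : ℝ), 0 ≤ s → s ≤ 1 → 0 ≤ t → t ≤ 1 →
      (f0 + s • u + t • v) ∈ cubeSurface := by
    intro s t hs hs' ht ht'
    rw [← haff' s t hs hs' ht ht']
    exact hmem _ (mem_unitSq hs hs' ht ht')
  have hbnd : ∀ (s t : ℝ), 0 ≤ s → s ≤ 1 → 0 ≤ t → t ≤ 1 → ∀ j,
      0 ≤ f0 j + s * u j + t * v j ∧ f0 j + s * u j + t * v j ≤ 1 := by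
    intro s t hs hs' ht ht' j
    have := (hFmem s t hs hs' ht ht').1 j
    rwa [happ] at this
  have hdiv7 : ∀ m : Fin 7, 0 ≤ ((m : ℕ) : ℝ)/7 ∧ ((m : ℕ) : ℝ)/7 ≤ 1 := by
    intro m
    constructor
    · positivity
    · have : ((m : ℕ) : ℝ) ≤ 6 := by exact_mod_cast Nat.le_of_lt_succ m.isLt
      linarith
  have hfin7 : ∀ (m m' : Fin 7), m ≠ m' → ((m : ℕ) : ℝ) - ((m' : ℕ) : ℝ) ≠ 0 := by
    intro m m' hne
    have : (m : ℕ) ≠ (m' : ℕ) := fun h => hne (Fin.ext h)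
    intro h
    exact this (by exact_mod_cast sub_eq_zero.mp h)
  have hcard : Fintype.card (Fin 3 × Bool) < Fintype.card (Fin 7) := by simp
  -- inner pigeonhole
  have inner_ph : ∀ t : ℝ, 0 ≤ t → t ≤ 1 → ∃ (i : Fin 3) (b : Bool),
      u i = 0 ∧ f0 i + t * v i = bval b := by
    intro t ht ht'
    have hpick : ∀ m : Fin 7, ∃ ib : Fin 3 × Bool,
        f0 ib.1 + ((m : ℕ) : ℝ)/7 * u ib.1 + t * v ib.1 = bval ib.2 := by
      intro m
      obtain ⟨hm1, hm2⟩ := hdiv7 m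
      obtain ⟨-, i, hi⟩ := hFmem _ t hm1 hm2 ht ht'
      rw [happ] at hi
      rcases hi with hi | hi
      · exact ⟨(i, false), by simpa [bval] using hi⟩
      · exact ⟨(i, true), by simpa [bval] using hi⟩
    choose g hg using hpick
    obtain ⟨m, m', hmm', heq⟩ := Fintype.exists_ne_map_eq_of_card_lt g hcard
    have e1 := hg m
    have e2 := hg m'
    rw [← heq] at e2
    have h3 : (((m : ℕ) : ℝ) - ((m' : ℕ) : ℝ)) * (u (g m).1 / 7) = 0 := by
      linear_combination e1 - e2
    have hu : u (g m).1 = 0 := by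
      rcases mul_eq_zero.mp h3 with h | h
      · exact absurd h (hfin7 m m' hmm')
      · field_simp at h; simpa using h
    refine ⟨(g m).1, (g m).2, hu, ?_⟩
    rw [hu] at e1
    linarith [e1]
  -- outer pigeonhole
  obtain ⟨i0, b0, hui0, hvi0, hfi0⟩ : ∃ (i : Fin 3) (b : Bool),
      u i = 0 ∧ v i = 0 ∧ f0 i = bval b := by
    have hpick : ∀ m : Fin 7, ∃ ib : Fin 3 × Bool,
        u ib.1 = 0 ∧ f0 ib.1 + ((m : ℕ) : ℝ)/7 * v ib.1 = bval ib.2 := by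
      intro m
      obtain ⟨hm1, hm2⟩ := hdiv7 m
      obtain ⟨i, b, h1, h2⟩ := inner_ph _ hm1 hm2
      exact ⟨(i, b), h1, h2⟩
    choose g hg using hpick
    obtain ⟨m, m', hmm', heq⟩ := Fintype.exists_ne_map_eq_of_card_lt g hcard
    obtain ⟨hu1, e1⟩ := hg m
    obtain ⟨-, e2⟩ := hg m'
    rw [← heq] at e2
    have h3 : (((m : ℕ) : ℝ) - ((m' : ℕ) : ℝ)) * (v (g m).1 / 7) = 0 := by
      linear_combination e1 - e2
    have hv : v (g m).1 = 0 := by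
      rcases mul_eq_zero.mp h3 with h | h
      · exact absurd h (hfin7 m m' hmm')
      · field_simp at h; simpa using h
    refine ⟨(g m).1, (g m).2, hu1, hv, ?_⟩
    rw [hv] at e1
    linarith [e1]
  -- the two other coordinates
  obtain ⟨j1, j2, h12, h1i, h2i, hcov⟩ := fin3_compl i0
  -- norms of u and v
  have hnu : u j1 ^ 2 + u j2 ^ 2 = 1 := by
    have h1 : ‖u‖ ^ 2 = 1 := by
      rw [hudef, ← dist_eq_norm, hf _ h10 _ h00, dist_sq_R2]
      norm_num [mk2_e0, mk2_e1]
    rw [norm_sq_R3, sum3_eq _ i0 j1 j2 h12 h1i h2i hcov, hui0] at h1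
    linarith [h1]
  have hnv : v j1 ^ 2 + v j2 ^ 2 = 1 := by
    have h1 : ‖v‖ ^ 2 = 1 := by
      rw [hvdef, ← dist_eq_norm, hf _ h01 _ h00, dist_sq_R2]
      norm_num [mk2_e0, mk2_e1]
    rw [norm_sq_R3, sum3_eq _ i0 j1 j2 h12 h1i h2i hcov, hvi0] at h1
    linarith [h1]
  -- orthogonality
  have hUV : u j1 * v j1 + u j2 * v j2 = 0 := by
    have hsub : u - v = f (mk2 1 0) - f (mk2 0 1) := by rw [hudef, hvdef]; abel
    have h2 : ‖u - v‖ ^ 2 = 2 := by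
      rw [hsub, ← dist_eq_norm, hf _ h10 _ h01, dist_sq_R2]
      norm_num [mk2_e0, mk2_e1]
    have hnu' : ‖u‖ ^ 2 = 1 := by
      rw [norm_sq_R3, sum3_eq _ i0 j1 j2 h12 h1i h2i hcov, hui0]; linarith [hnu]
    have hnv' : ‖v‖ ^ 2 = 1 := by
      rw [norm_sq_R3, sum3_eq _ i0 j1 j2 h12 h1i h2i hcov, hvi0]; linarith [hnv]
    have hpol := norm_sub_sq_real u v
    rw [h2, hnu', hnv'] at hpol
    have hip : ⟪u, v⟫ = 0 := by linarith
    rw [inner_R3, sum3_eq _ i0 j1 j2 h12 h1i h2i hcov, hui0] at hip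
    linarith [hip]
  -- bounds at the four corners, coordinatewise
  have hb00 : ∀ j, 0 ≤ f0 j ∧ f0 j ≤ 1 := by
    intro j
    have := hbnd 0 0 le_rfl zero_le_one le_rfl zero_le_one j
    constructor <;> [linarith [this.1]; linarith [this.2]]
  have hb10 : ∀ j, 0 ≤ f0 j + u j ∧ f0 j + u j ≤ 1 := by
    intro j
    have := hbnd 1 0 zero_le_one le_rfl le_rfl zero_le_one j
    constructor <;> [linarith [this.1]; linarith [this.2]]
  have hb01 : ∀ j, 0 ≤ f0 j + v j ∧ f0 j + v j ≤ 1 := by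
    intro j
    have := hbnd 0 1 le_rfl zero_le_one zero_le_one le_rfl j
    constructor <;> [linarith [this.1]; linarith [this.2]]
  have hb11 : ∀ j, 0 ≤ f0 j + u j + v j ∧ f0 j + u j + v j ≤ 1 := by
    intro j
    have := hbnd 1 1 zero_le_one le_rfl zero_le_one le_rfl j
    constructor <;> [linarith [this.1]; linarith [this.2]]
  -- |u j| + |v j| ≤ 1
  have habs : ∀ j, |u j| + |v j| ≤ 1 := by
    intro j
    exact abs_add_le (f0 j) (u j) (v j) (hb00 j).1 (hb00 j).2 (hb10 j).1 (hb10 j).2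
      (hb01 j).1 (hb01 j).2 (hb11 j).1 (hb11 j).2
  have hu_ge : 1 ≤ |u j1| + |u j2| := one_le_abs_add _ _ hnu
  have hv_ge : 1 ≤ |v j1| + |v j2| := one_le_abs_add _ _ hnv
  have hu_eq : |u j1| + |u j2| = 1 := le_antisymm (by linarith [habs j1, habs j2]) hu_ge
  have hv_eq : |v j1| + |v j2| = 1 := le_antisymm (by linarith [habs j1, habs j2]) hv_ge
  have sqz : ∀ x : ℝ, x = 0 → x ^ 2 = 0 := by intro x h; rw [h]; ring
  have hu_or : u j1 = 0 ∨ u j2 = 0 := by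
    have hs : (|u j1| + |u j2|) ^ 2 = 1 := by rw [hu_eq]; norm_num
    have hexp : |u j1| ^ 2 + 2 * (|u j1| * |u j2|) + |u j2| ^ 2 = 1 := by
      linear_combination hs
    rw [sq_abs, sq_abs] at hexp
    have h : |u j1| * |u j2| = 0 := by linarith [hnu]
    rcases mul_eq_zero.mp h with h | h
    · exact Or.inl (abs_eq_zero.mp h)
    · exact Or.inr (abs_eq_zero.mp h)
  have hv_or : v j1 = 0 ∨ v j2 = 0 := by
    have hs : (|v j1| + |v j2|) ^ 2 = 1 := by rw [hv_eq]; norm_num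
    have hexp : |v j1| ^ 2 + 2 * (|v j1| * |v j2|) + |v j2| ^ 2 = 1 := by
      linear_combination hs
    rw [sq_abs, sq_abs] at hexp
    have h : |v j1| * |v j2| = 0 := by linarith [hnv]
    rcases mul_eq_zero.mp h with h | h
    · exact Or.inl (abs_eq_zero.mp h)
    · exact Or.inr (abs_eq_zero.mp h)
  -- scenario analysis
  have hscen : (u j1 = 0 ∧ v j2 = 0 ∧ u j2 ^ 2 = 1 ∧ v j1 ^ 2 = 1) ∨
      (u j2 = 0 ∧ v j1 = 0 ∧ u j1 ^ 2 = 1 ∧ v j2 ^ 2 = 1) := by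
    rcases hu_or with hu1 | hu2 <;> rcases hv_or with hv1 | hv2
    · exfalso
      have hu2' : u j2 ^ 2 = 1 := by have := sqz _ hu1; linarith [hnu]
      have hv2' : v j2 ^ 2 = 1 := by have := sqz _ hv1; linarith [hnv]
      have hprod : u j2 * v j2 = 0 := by
        have e1 : u j1 * v j1 = 0 := by rw [hu1]; ring
        linarith [hUV]
      rcases mul_eq_zero.mp hprod with h | h
      · have := sqz _ h; linarith
      · have := sqz _ h; linarith
    · exact Or.inl ⟨hu1, hv2, by have := sqz _ hu1; linarith [hnu],
        by have := sqz _ hv2; linarith [hnv]⟩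
    · exact Or.inr ⟨hu2, hv1, by have := sqz _ hu2; linarith [hnu],
        by have := sqz _ hv1; linarith [hnv]⟩
    · exfalso
      have hu1' : u j1 ^ 2 = 1 := by have := sqz _ hu2; linarith [hnu]
      have hv1' : v j1 ^ 2 = 1 := by have := sqz _ hv2; linarith [hnv]
      have hprod : u j1 * v j1 = 0 := by
        have e1 : u j2 * v j2 = 0 := by rw [hu2]; ring
        linarith [hUV]
      rcases mul_eq_zero.mp hprod with h | h
      · have := sqz _ h; linarith
      · have := sqz _ h; linarith
  -- corner values are 0 or 1 in every coordinate
  have hW : ∀ k : Fin 2 × Fin 2, f (cpt k) = f0 + cptx k.1 • u + cptx k.2 • v := by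
    intro k
    rcases cptx01 k.1 with h1 | h1 <;> rcases cptx01 k.2 with h2 | h2 <;>
      exact haff' _ _ (by norm_num [h1]) (by norm_num [h1]) (by norm_num [h2]) (by norm_num [h2])
  have h01' : ∀ (k : Fin 2 × Fin 2) (i : Fin 3), f (cpt k) i = 0 ∨ f (cpt k) i = 1 := by
    intro k i
    rw [hW k, happ]
    rcases hcov i with hi | hi | hi
    · rw [hi, hui0, hvi0, hfi0]
      cases b0
      · left; simp [bval]
      · right; simp [bval]
    · rw [hi]
      rcases hscen with ⟨hA, hB, hC, hD⟩ | ⟨hA, hB, hC, hD⟩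
      · -- u j1 = 0, v j1 = ±1
        rw [hA]
        have : f0 j1 + cptx k.1 * 0 + cptx k.2 * v j1 = f0 j1 + cptx k.2 * v j1 := by ring
        rw [this]
        exact vertex_coord _ _ _ (cptx01 k.2) (hb00 j1).1 (hb00 j1).2 (hb01 j1).1 (hb01 j1).2
          (sq_one_cases hD)
      · -- v j1 = 0, u j1 = ±1
        rw [hB]
        have : f0 j1 + cptx k.1 * u j1 + cptx k.2 * 0 = f0 j1 + cptx k.1 * u j1 := by ring
        rw [this]
        exact vertex_coord _ _ _ (cptx01 k.1) (hb00 j1).1 (hb00 j1).2 (hb10 j1).1 (hb10 j1).2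
          (sq_one_cases hC)
    · rw [hi]
      rcases hscen with ⟨hA, hB, hC, hD⟩ | ⟨hA, hB, hC, hD⟩
      · rw [hB]
        have : f0 j2 + cptx k.1 * u j2 + cptx k.2 * 0 = f0 j2 + cptx k.1 * u j2 := by ring
        rw [this]
        exact vertex_coord _ _ _ (cptx01 k.1) (hb00 j2).1 (hb00 j2).2 (hb10 j2).1 (hb10 j2).2
          (sq_one_cases hC)
      · rw [hA]
        have : f0 j2 + cptx k.1 * 0 + cptx k.2 * v j2 = f0 j2 + cptx k.2 * v j2 := by ring
        rw [this]
        exact vertex_coord _ _ _ (cptx01 k.2) (hb00 j2).1 (hb00 j2).2 (hb01 j2).1 (hb01 j2).2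
          (sq_one_cases hD)
  -- define the boolean corner labels
  have hbv : ∀ k'', bvec (fun i => if f (cpt k'') i = 1 then true else false) = f (cpt k'') := by
    intro k''
    ext i
    show bval (if f (cpt k'') i = 1 then true else false) = f (cpt k'') i
    rcases h01' k'' i with h | h <;> simp [bval, h]
  refine ⟨i0, b0, fun k i => if f (cpt k) i = 1 then true else false, ?_, ?_, ?_, ?_⟩
  · intro k
    exact (hbv k).symm
  · intro k k'
    have hd : (vdiff (fun i => if f (cpt k) i = 1 then true else false)
        (fun i => if f (cpt k') i = 1 then true else false) : ℝ) = (kdiff k k' : ℝ) := by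
      rw [← bvec_dist, hbv, hbv, ← dist_eq_norm, hf _ (cpt_mem k) _ (cpt_mem k'), cpt_dist]
    exact_mod_cast hd
  · intro k
    have hx0 : f (cpt k) i0 = bval b0 := by
      rw [hW k, happ, hui0, hvi0, hfi0]; ring
    show (if f (cpt k) i0 = 1 then true else false) = b0
    cases b0
    · simp [bval] at hx0; simp [hx0]
    · simp [bval] at hx0; simp [hx0]
  · intro x hx
    rw [haff x hx]
    have e : (f0 + x 0 • u + x 1 • v) i0 = f0 i0 + x 0 * u i0 + x 1 * v i0 := rfl
    rw [e, hui0, hvi0, hfi0]; ring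

/-! ### Combinatorial part -/

def flip (j : Fin 3) (v : Fin 3 → Bool) : Fin 3 → Bool := fun i => if i = j then !v i else v i
def lab (a : Fin 3 → Bool) (j1 j2 : Fin 3) (k : Fin 2 × Fin 2) : Fin 3 → Bool :=
  (if k.1 = 1 then flip j1 else id) ((if k.2 = 1 then flip j2 else id) a)
def third (j1 j2 : Fin 3) : Fin 3 :=
  if j1 ≠ 0 ∧ j2 ≠ 0 then 0 else if j1 ≠ 1 ∧ j2 ≠ 1 then 1 else 2
def fc (a : Fin 3 → Bool) (j1 j2 : Fin 3) : Fin 3 × Bool := (third j1 j2, a (third j1 j2))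

theorem ex_flip : ∀ u v, vdiff u v = 1 → ∃ j, v = flip j u := by decide
theorem flip_ne : ∀ (a : Fin 3 → Bool) (j1 j2 : Fin 3),
    vdiff (flip j1 a) (flip j2 a) = 2 → j1 ≠ j2 := by decide
theorem diag_unique : ∀ (a : Fin 3 → Bool) (j1 j2 : Fin 3) (z : Fin 3 → Bool), j1 ≠ j2 →
    vdiff (flip j1 a) z = 1 → vdiff (flip j2 a) z = 1 → vdiff a z = 2 →
    z = flip j1 (flip j2 a) := by decide

theorem struct (w : (Fin 2 × Fin 2) → (Fin 3 → Bool))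
    (h : ∀ k k', vdiff (w k) (w k') = kdiff k k') :
    ∃ a j1 j2, j1 ≠ j2 ∧ w = lab a j1 j2 := by
  obtain ⟨j1, hj1⟩ := ex_flip (w (0,0)) (w (1,0)) (h (0,0) (1,0))
  obtain ⟨j2, hj2⟩ := ex_flip (w (0,0)) (w (0,1)) (h (0,0) (0,1))
  have hne : j1 ≠ j2 := flip_ne (w (0,0)) j1 j2 (by rw [← hj1, ← hj2]; exact h (1,0) (0,1))
  have h11 : w (1,1) = flip j1 (flip j2 (w (0,0))) := by
    refine diag_unique (w (0,0)) j1 j2 (w (1,1)) hne ?_ ?_ ?_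
    · rw [← hj1]; exact h (1,0) (1,1)
    · rw [← hj2]; exact h (0,1) (1,1)
    · exact h (0,0) (1,1)
  refine ⟨w (0,0), j1, j2, hne, funext fun k => ?_⟩
  obtain ⟨k1, k2⟩ := k
  fin_cases k1 <;> fin_cases k2 <;> simp [lab] <;> assumption

theorem right_trans : ∀ (a a' : Fin 3 → Bool) (j1 j2 j1' j2' : Fin 3),
    lab a j1 j2 (1,0) = lab a' j1' j2' (0,0) →
    lab a j1 j2 (1,1) = lab a' j1' j2' (0,1) →
    a' = flip j1 a ∧ j2' = j2 := by decide

theorem up_trans : ∀ (a a' : Fin 3 → Bool) (j1 j2 j1' j2' : Fin 3),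
    lab a j1 j2 (0,1) = lab a' j1' j2' (0,0) →
    lab a j1 j2 (1,1) = lab a' j1' j2' (1,0) →
    a' = flip j2 a ∧ j1' = j1 := by decide

theorem face_id : ∀ (a : Fin 3 → Bool) (j1 j2 i : Fin 3) (b : Bool), j1 ≠ j2 →
    (∀ k, lab a j1 j2 k i = b) → (i, b) = fc a j1 j2 := by decide

set_option maxHeartbeats 4000000 in
theorem key : ∀ (a : Fin 3 → Bool) (j1 j2 n1 n2 n3 n4 n5 n6 : Fin 3),
    j1 ≠ j2 → n1 ≠ j2 → n2 ≠ j2 → n3 ≠ n2 → n4 ≠ n3 → n5 ≠ n4 → n6 ≠ n4 →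
    ¬ (∀ f : Fin 3 × Bool,
      f = fc a j1 j2 ∨
      f = fc (flip j1 a) n1 j2 ∨
      f = fc (flip n1 (flip j1 a)) n2 j2 ∨
      f = fc (flip j2 (flip n1 (flip j1 a))) n2 n3 ∨
      f = fc (flip n2 (flip j2 (flip n1 (flip j1 a)))) n4 n3 ∨
      f = fc (flip n3 (flip n2 (flip j2 (flip n1 (flip j1 a))))) n4 n5 ∨
      f = fc (flip n5 (flip n3 (flip n2 (flip j2 (flip n1 (flip j1 a)))))) n4 n6) := by decide

/-! ### Bridging: from a surjective blueprint to labelled cells -/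

lemma pt_glue (P : Polyomino) {c d : Cell} (hcm : c ∈ P.cells) (hdm : d ∈ P.cells)
    {x y : R2} (hx : x ∈ unitSq) (hy : y ∈ unitSq)
    (hjoin : (c, d) ∈ P.joins) (h : cellPt c x = cellPt d y) :
    pt P c hcm x hx = pt P d hdm y hy :=
  Quot.sound ⟨h, Or.inr hjoin⟩

lemma mk2_congr {a b a' b' : ℝ} (ha : a = a') (hb : b = b') : mk2 a b = mk2 a' b' := by
  rw [ha, hb]

lemma cellPt_cpt (c : Cell) (k : Fin 2 × Fin 2) :
    cellPt c (cpt k) = mk2 ((c.1 : ℝ) + cptx k.1) ((c.2 : ℝ) + cptx k.2) := rfl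

lemma cptx_zero : cptx 0 = 0 := rfl
lemma cptx_one : cptx 1 = 1 := rfl

lemma cell_data (P : Polyomino) (β : PolySpace P → R3)
    (hβ : IsBlueprint P β) (hrange : Set.range β = cubeSurface)
    (c : Cell) (hcm : c ∈ P.cells) :
    ∃ (i0 : Fin 3) (b0 : Bool) (w : Fin 2 × Fin 2 → Fin 3 → Bool),
      (∀ k, β (pt P c hcm (cpt k) (cpt_mem k)) = bvec (w k)) ∧
      (∀ k k', vdiff (w k) (w k') = kdiff k k') ∧
      (∀ k, w k i0 = b0) ∧
      (∀ x (hx : x ∈ unitSq), β (pt P c hcm x hx) i0 = bval b0) := by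
  set f : R2 → R3 := fun x => if hx : x ∈ unitSq then β (pt P c hcm x hx) else 0 with hfdef
  have hfval : ∀ x (hx : x ∈ unitSq), f x = β (pt P c hcm x hx) := fun x hx => dif_pos hx
  have hfiso : ∀ x, x ∈ unitSq → ∀ y, y ∈ unitSq → dist (f x) (f y) = dist x y := by
    intro x hx y hy
    rw [hfval x hx, hfval y hy]
    exact hβ c hcm x y hx hy
  have hfmem : ∀ x, x ∈ unitSq → f x ∈ cubeSurface := by
    intro x hx
    rw [hfval x hx, ← hrange]
    exact Set.mem_range_self _
  obtain ⟨i0, b0, w, h1, h2, h3, h4⟩ := square_in_cube f hfiso hfmem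
  refine ⟨i0, b0, w, ?_, h2, h3, ?_⟩
  · intro k
    rw [← hfval (cpt k) (cpt_mem k)]
    exact h1 k
  · intro x hx
    rw [← hfval x hx]
    exact h4 x hx

set_option maxHeartbeats 1000000 in
/-- The polyomino `P_W` does not fold onto the surface of the unit cube. -/
theorem pw_not_foldable (P : Polyomino)
    (hc : P.cells = pwCells) (hj : P.joins = fullJoins pwCells) :
    ¬ FoldsOntoCube P := by
  rintro ⟨F, -, β, hβ, hrange, -⟩
  have m1 : ((1,1) : Cell) ∈ P.cells := by rw [hc]; decide
  have m2 : ((2,1) : Cell) ∈ P.cells := by rw [hc]; decide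
  have m3 : ((3,1) : Cell) ∈ P.cells := by rw [hc]; decide
  have m4 : ((3,2) : Cell) ∈ P.cells := by rw [hc]; decide
  have m5 : ((4,2) : Cell) ∈ P.cells := by rw [hc]; decide
  have m6 : ((4,3) : Cell) ∈ P.cells := by rw [hc]; decide
  have m7 : ((4,4) : Cell) ∈ P.cells := by rw [hc]; decide
  obtain ⟨i1, b1, w1, hw1, hv1, hfa1, hco1⟩ := cell_data P β hβ hrange _ m1
  obtain ⟨i2, b2, w2, hw2, hv2, hfa2, hco2⟩ := cell_data P β hβ hrange _ m2
  obtain ⟨i3, b3, w3, hw3, hv3, hfa3, hco3⟩ := cell_data P β hβ hrange _ m3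
  obtain ⟨i4, b4, w4, hw4, hv4, hfa4, hco4⟩ := cell_data P β hβ hrange _ m4
  obtain ⟨i5, b5, w5, hw5, hv5, hfa5, hco5⟩ := cell_data P β hβ hrange _ m5
  obtain ⟨i6, b6, w6, hw6, hv6, hfa6, hco6⟩ := cell_data P β hβ hrange _ m6
  obtain ⟨i7, b7, w7, hw7, hv7, hfa7, hco7⟩ := cell_data P β hβ hrange _ m7
  have hj12 : (((1,1) : Cell), ((2,1) : Cell)) ∈ P.joins := by rw [hj]; decide
  have hj23 : (((2,1) : Cell), ((3,1) : Cell)) ∈ P.joins := by rw [hj]; decide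
  have hj34 : (((3,1) : Cell), ((3,2) : Cell)) ∈ P.joins := by rw [hj]; decide
  have hj45 : (((3,2) : Cell), ((4,2) : Cell)) ∈ P.joins := by rw [hj]; decide
  have hj56 : (((4,2) : Cell), ((4,3) : Cell)) ∈ P.joins := by rw [hj]; decide
  have hj67 : (((4,3) : Cell), ((4,4) : Cell)) ∈ P.joins := by rw [hj]; decide
  -- corner gluings
  have glue : ∀ (c d : Cell) (hcc : c ∈ P.cells) (hdd : d ∈ P.cells) (k k' : Fin 2 × Fin 2),
      (c, d) ∈ P.joins → cellPt c (cpt k) = cellPt d (cpt k') →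
      β (pt P c hcc (cpt k) (cpt_mem k)) = β (pt P d hdd (cpt k') (cpt_mem k')) :=
    fun c d hcc hdd k k' hjn h => congrArg β (pt_glue P hcc hdd _ _ hjn h)
  have g12a : w1 (1,0) = w2 (0,0) := bvec_inj (by
    rw [← hw1 (1,0), ← hw2 (0,0)]
    exact glue _ _ m1 m2 _ _ hj12 (by
      rw [cellPt_cpt, cellPt_cpt]; apply mk2_congr <;> norm_num [cptx_zero, cptx_one]))
  have g12b : w1 (1,1) = w2 (0,1) := bvec_inj (by
    rw [← hw1 (1,1), ← hw2 (0,1)]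
    exact glue _ _ m1 m2 _ _ hj12 (by
      rw [cellPt_cpt, cellPt_cpt]; apply mk2_congr <;> norm_num [cptx_zero, cptx_one]))
  have g23a : w2 (1,0) = w3 (0,0) := bvec_inj (by
    rw [← hw2 (1,0), ← hw3 (0,0)]
    exact glue _ _ m2 m3 _ _ hj23 (by
      rw [cellPt_cpt, cellPt_cpt]; apply mk2_congr <;> norm_num [cptx_zero, cptx_one]))
  have g23b : w2 (1,1) = w3 (0,1) := bvec_inj (by
    rw [← hw2 (1,1), ← hw3 (0,1)]
    exact glue _ _ m2 m3 _ _ hj23 (by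
      rw [cellPt_cpt, cellPt_cpt]; apply mk2_congr <;> norm_num [cptx_zero, cptx_one]))
  have g34a : w3 (0,1) = w4 (0,0) := bvec_inj (by
    rw [← hw3 (0,1), ← hw4 (0,0)]
    exact glue _ _ m3 m4 _ _ hj34 (by
      rw [cellPt_cpt, cellPt_cpt]; apply mk2_congr <;> norm_num [cptx_zero, cptx_one]))
  have g34b : w3 (1,1) = w4 (1,0) := bvec_inj (by
    rw [← hw3 (1,1), ← hw4 (1,0)]
    exact glue _ _ m3 m4 _ _ hj34 (by
      rw [cellPt_cpt, cellPt_cpt]; apply mk2_congr <;> norm_num [cptx_zero, cptx_one]))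
  have g45a : w4 (1,0) = w5 (0,0) := bvec_inj (by
    rw [← hw4 (1,0), ← hw5 (0,0)]
    exact glue _ _ m4 m5 _ _ hj45 (by
      rw [cellPt_cpt, cellPt_cpt]; apply mk2_congr <;> norm_num [cptx_zero, cptx_one]))
  have g45b : w4 (1,1) = w5 (0,1) := bvec_inj (by
    rw [← hw4 (1,1), ← hw5 (0,1)]
    exact glue _ _ m4 m5 _ _ hj45 (by
      rw [cellPt_cpt, cellPt_cpt]; apply mk2_congr <;> norm_num [cptx_zero, cptx_one]))
  have g56a : w5 (0,1) = w6 (0,0) := bvec_inj (by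
    rw [← hw5 (0,1), ← hw6 (0,0)]
    exact glue _ _ m5 m6 _ _ hj56 (by
      rw [cellPt_cpt, cellPt_cpt]; apply mk2_congr <;> norm_num [cptx_zero, cptx_one]))
  have g56b : w5 (1,1) = w6 (1,0) := bvec_inj (by
    rw [← hw5 (1,1), ← hw6 (1,0)]
    exact glue _ _ m5 m6 _ _ hj56 (by
      rw [cellPt_cpt, cellPt_cpt]; apply mk2_congr <;> norm_num [cptx_zero, cptx_one]))
  have g67a : w6 (0,1) = w7 (0,0) := bvec_inj (by
    rw [← hw6 (0,1), ← hw7 (0,0)]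
    exact glue _ _ m6 m7 _ _ hj67 (by
      rw [cellPt_cpt, cellPt_cpt]; apply mk2_congr <;> norm_num [cptx_zero, cptx_one]))
  have g67b : w6 (1,1) = w7 (1,0) := bvec_inj (by
    rw [← hw6 (1,1), ← hw7 (1,0)]
    exact glue _ _ m6 m7 _ _ hj67 (by
      rw [cellPt_cpt, cellPt_cpt]; apply mk2_congr <;> norm_num [cptx_zero, cptx_one]))
  -- labelled structure of each cell
  obtain ⟨a1, p1, q1, hne1, hlab1⟩ := struct w1 hv1
  obtain ⟨a2, p2, q2, hne2, hlab2⟩ := struct w2 hv2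
  obtain ⟨a3, p3, q3, hne3, hlab3⟩ := struct w3 hv3
  obtain ⟨a4, p4, q4, hne4, hlab4⟩ := struct w4 hv4
  obtain ⟨a5, p5, q5, hne5, hlab5⟩ := struct w5 hv5
  obtain ⟨a6, p6, q6, hne6, hlab6⟩ := struct w6 hv6
  obtain ⟨a7, p7, q7, hne7, hlab7⟩ := struct w7 hv7
  -- transitions
  obtain ⟨ha2, hq2⟩ := right_trans a1 a2 p1 q1 p2 q2
    (by rw [← hlab1, ← hlab2]; exact g12a) (by rw [← hlab1, ← hlab2]; exact g12b)
  obtain ⟨ha3, hq3⟩ := right_trans a2 a3 p2 q2 p3 q3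
    (by rw [← hlab2, ← hlab3]; exact g23a) (by rw [← hlab2, ← hlab3]; exact g23b)
  obtain ⟨ha4, hp4⟩ := up_trans a3 a4 p3 q3 p4 q4
    (by rw [← hlab3, ← hlab4]; exact g34a) (by rw [← hlab3, ← hlab4]; exact g34b)
  obtain ⟨ha5, hq5⟩ := right_trans a4 a5 p4 q4 p5 q5
    (by rw [← hlab4, ← hlab5]; exact g45a) (by rw [← hlab4, ← hlab5]; exact g45b)
  obtain ⟨ha6, hp6⟩ := up_trans a5 a6 p5 q5 p6 q6
    (by rw [← hlab5, ← hlab6]; exact g56a) (by rw [← hlab5, ← hlab6]; exact g56b)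
  obtain ⟨ha7, hp7⟩ := up_trans a6 a7 p6 q6 p7 q7
    (by rw [← hlab6, ← hlab7]; exact g67a) (by rw [← hlab6, ← hlab7]; exact g67b)
  -- faces of the cells
  have hfc1 : (i1, b1) = fc a1 p1 q1 :=
    face_id a1 p1 q1 i1 b1 hne1 (fun k => by rw [← hlab1]; exact hfa1 k)
  have hfc2 : (i2, b2) = fc a2 p2 q2 :=
    face_id a2 p2 q2 i2 b2 hne2 (fun k => by rw [← hlab2]; exact hfa2 k)
  have hfc3 : (i3, b3) = fc a3 p3 q3 :=
    face_id a3 p3 q3 i3 b3 hne3 (fun k => by rw [← hlab3]; exact hfa3 k)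
  have hfc4 : (i4, b4) = fc a4 p4 q4 :=
    face_id a4 p4 q4 i4 b4 hne4 (fun k => by rw [← hlab4]; exact hfa4 k)
  have hfc5 : (i5, b5) = fc a5 p5 q5 :=
    face_id a5 p5 q5 i5 b5 hne5 (fun k => by rw [← hlab5]; exact hfa5 k)
  have hfc6 : (i6, b6) = fc a6 p6 q6 :=
    face_id a6 p6 q6 i6 b6 hne6 (fun k => by rw [← hlab6]; exact hfa6 k)
  have hfc7 : (i7, b7) = fc a7 p7 q7 :=
    face_id a7 p7 q7 i7 b7 hne7 (fun k => by rw [← hlab7]; exact hfa7 k)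
  -- surjectivity of the face assignment
  have hsurj : ∀ fc0 : Fin 3 × Bool, fc0 = (i1, b1) ∨ fc0 = (i2, b2) ∨ fc0 = (i3, b3) ∨
      fc0 = (i4, b4) ∨ fc0 = (i5, b5) ∨ fc0 = (i6, b6) ∨ fc0 = (i7, b7) := by
    rintro ⟨i, b⟩
    set p : R3 := WithLp.toLp 2 (fun j => if j = i then bval b else 1/2 : Fin 3 → ℝ) with hpdef
    have hpj : ∀ j, p j = if j = i then bval b else 1/2 := fun j => rfl
    have hpmem : p ∈ cubeSurface := by
      constructor
      · intro j
        rw [hpj j]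
        by_cases hji : j = i
        · rw [if_pos hji]; cases b <;> norm_num [bval]
        · rw [if_neg hji]; norm_num
      · refine ⟨i, ?_⟩
        rw [hpj i, if_pos rfl]
        cases b
        · left; rfl
        · right; rfl
    have hprange : p ∈ Set.range β := by rw [hrange]; exact hpmem
    obtain ⟨q, hq⟩ := hprange
    obtain ⟨⟨⟨cq, hcq⟩, ⟨x, hx⟩⟩, hrep⟩ := Quot.exists_rep q
    rw [← hrep] at hq
    have hpi : ∀ (i' : Fin 3) (b' : Bool),
        β (pt P cq hcq x hx) i' = bval b' → ((i : Fin 3), (b : Bool)) = (i', b') := by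
      intro i' b' hco
      have hpv : p i' = bval b' := by rw [← hq]; exact hco
      by_cases hii : i' = i
      · have hbb : bval b = bval b' := by rw [← hpv, hpj i', if_pos hii]
        rw [hii]
        exact Prod.ext rfl (bval_inj hbb)
      · exfalso
        rw [hpj i', if_neg hii] at hpv
        cases b' <;> norm_num [bval] at hpv
    have hcell : cq ∈ pwCells := by rw [← hc]; exact hcq
    have hcases : cq = (1,1) ∨ cq = (2,1) ∨ cq = (3,1) ∨ cq = (3,2) ∨ cq = (4,2) ∨
        cq = (4,3) ∨ cq = (4,4) := by
      simpa [pwCells] using hcell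
    rcases hcases with h | h | h | h | h | h | h <;> subst h
    · exact Or.inl (hpi i1 b1 (hco1 x hx))
    · exact Or.inr (Or.inl (hpi i2 b2 (hco2 x hx)))
    · exact Or.inr (Or.inr (Or.inl (hpi i3 b3 (hco3 x hx))))
    · exact Or.inr (Or.inr (Or.inr (Or.inl (hpi i4 b4 (hco4 x hx)))))
    · exact Or.inr (Or.inr (Or.inr (Or.inr (Or.inl (hpi i5 b5 (hco5 x hx))))))
    · exact Or.inr (Or.inr (Or.inr (Or.inr (Or.inr (Or.inl (hpi i6 b6 (hco6 x hx)))))))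
    · exact Or.inr (Or.inr (Or.inr (Or.inr (Or.inr (Or.inr (hpi i7 b7 (hco7 x hx)))))))
  -- contradiction with the key combinatorial lemma
  subst ha2; subst ha3; subst ha4; subst ha5; subst ha6; subst ha7
  have e1 := hq2.symm; subst e1
  have e2 := hq3.symm; subst e2
  have e3 := hp4.symm; subst e3
  have e4 := hq5.symm; subst e4
  have e5 := hp6.symm; subst e5
  have e6 := hp7.symm; subst e6
  refine key a1 p1 q1 p2 p3 q4 p5 q6 q7 hne1 hne2 hne3 (Ne.symm hne4) hne5
    (Ne.symm hne6) (Ne.symm hne7) ?_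
  intro fc0
  rcases hsurj fc0 with h | h | h | h | h | h | h
  · exact Or.inl (h.trans hfc1)
  · exact Or.inr (Or.inl (h.trans hfc2))
  · exact Or.inr (Or.inr (Or.inl (h.trans hfc3)))
  · exact Or.inr (Or.inr (Or.inr (Or.inl (h.trans hfc4))))
  · exact Or.inr (Or.inr (Or.inr (Or.inr (Or.inl (h.trans hfc5)))))
  · exact Or.inr (Or.inr (Or.inr (Or.inr (Or.inr (Or.inl (h.trans hfc6))))))
  · exact Or.inr (Or.inr (Or.inr (Or.inr (Or.inr (Or.inr (h.trans hfc7))))))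

end CubeFold
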